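/- For logits f : Fin K → ℝ and temperatures 0 < T, the softmax probability of the argmax class is nondecreasing as T decreases: for 0 < T₁ ≤ T₂, if y attains max_j f(j), then exp(f(y)/T₁)/∑_j exp(f(j)/T₁) ≥ exp(f(y)/T₂)/∑_j exp(f(j)/T₂). -/
import Mathlib


open Real Finset

theorem softmax_max_antitone_in_temperature (K : ℕ) (hK : 0 < K) (f : Fin K → ℝ)
    (y : Fin K)
    (hy : f y = Finset.univ.sup' (Finset.univ_nonempty_iff.mpr ⟨⟨0, hK⟩⟩) f)
    (T₁ T₂ : ℝ) (h₁ : 0 < T₁) (h₁₂ : T₁ ≤ T₂) :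
    Real.exp (f y / T₂) / ∑ j, Real.exp (f j / T₂) ≤
      Real.exp (f y / T₁) / ∑ j, Real.exp (f j / T₁) := by
  have h₂ : 0 < T₂ := lt_of_lt_of_le h₁ h₁₂
  have : Nonempty (Fin K) := ⟨⟨0, hK⟩⟩
  have key : ∀ T : ℝ, 0 < T →
      Real.exp (f y / T) / ∑ j, Real.exp (f j / T)
        = 1 / ∑ j, Real.exp ((f j - f y) / T) := by
    intro T hT
    rw [div_eq_div_iff (by positivity) (by positivity), one_mul, Finset.mul_sum]
    apply Finset.sum_congr rfl
    intro j _
    rw [← Real.exp_add, sub_div, add_sub_cancel]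
  rw [key T₁ h₁, key T₂ h₂]
  have hle : ∀ j : Fin K, f j ≤ f y := by
    intro j
    rw [hy]
    exact Finset.le_sup' f (Finset.mem_univ j)
  have hsum : ∑ j, Real.exp ((f j - f y) / T₁) ≤ ∑ j, Real.exp ((f j - f y) / T₂) := by
    apply Finset.sum_le_sum
    intro j _
    apply Real.exp_le_exp.mpr
    have ha : f j - f y ≤ 0 := sub_nonpos.mpr (hle j)
    rw [div_eq_mul_inv, div_eq_mul_inv]
    exact mul_le_mul_of_nonpos_left (by gcongr) ha
  exact one_div_le_one_div_of_le (by positivity) hsum
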